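/- Let 0 < γ ≤ 1 ≤ Γ and let x ∈ [γ,Γ], ν ∈ [0,1]. Then (1/(2Γ²))·ν·(1−ν)·(x−1)² ≤ ln(1 − ν + ν·x) − ν·ln x ≤ (1/(2γ²))·ν·(1−ν)·(x−1)². -/

import Mathlib

open Set

lemma aux_d1 (p L c ν : ℝ) (h : 0 < 1 + ν * p) :
    HasDerivAt (fun t => Real.log (1 + t * p) - t * L - c * (t * (1 - t)))
      (p / (1 + ν * p) - L - c * (1 - 2 * ν)) ν := by
  have h1 : HasDerivAt (fun t : ℝ => 1 + t * p) p ν := by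
    simpa using ((hasDerivAt_id ν).mul_const p).const_add 1
  have h2 : HasDerivAt (fun t : ℝ => Real.log (1 + t * p)) (p / (1 + ν * p)) ν := by
    have := (Real.hasDerivAt_log h.ne').comp ν h1
    rw [div_eq_inv_mul]; exact this
  have h3 : HasDerivAt (fun t : ℝ => t * L) L ν := by
    simpa using (hasDerivAt_id ν).mul_const L
  have h4 : HasDerivAt (fun t : ℝ => c * (t * (1 - t))) (c * (1 - 2 * ν)) ν := by
    have : HasDerivAt (fun t : ℝ => t * (1 - t)) (1 * (1 - ν) + ν * (-1)) ν :=
      (hasDerivAt_id ν).mul ((hasDerivAt_id ν).const_sub 1)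
    have := this.const_mul c
    rw [show c * (1 - 2 * ν) = c * (1 * (1 - ν) + ν * (-1)) by ring]; exact this
  exact (h2.sub h3).sub h4

lemma aux_d2 (p L c ν : ℝ) (h : 0 < 1 + ν * p) :
    HasDerivAt (fun t => p / (1 + t * p) - L - c * (1 - 2 * t))
      (-(p ^ 2 / (1 + ν * p) ^ 2) + 2 * c) ν := by
  have h1 : HasDerivAt (fun t : ℝ => 1 + t * p) p ν := by
    simpa using ((hasDerivAt_id ν).mul_const p).const_add 1
  have h2 : HasDerivAt (fun t : ℝ => p / (1 + t * p))
      ((0 * (1 + ν * p) - p * p) / (1 + ν * p) ^ 2) ν :=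
    (hasDerivAt_const ν p).div h1 h.ne'
  have h4 : HasDerivAt (fun t : ℝ => c * (1 - 2 * t)) (c * (0 - 2)) ν := by
    have : HasDerivAt (fun t : ℝ => 1 - 2 * t) (0 - 2 * 1) ν :=
      (hasDerivAt_const ν (1:ℝ)).sub ((hasDerivAt_id ν).const_mul 2)
    simpa using this.const_mul c
  have := (h2.sub (hasDerivAt_const ν L)).sub h4
  rw [show -(p ^ 2 / (1 + ν * p) ^ 2) + 2 * c = (0 * (1 + ν * p) - p * p) / (1 + ν * p) ^ 2 - 0 - c * (0 - 2) by ring]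
  exact this

lemma aux_concave (p L c : ℝ) (hpos : ∀ ν ∈ Icc (0:ℝ) 1, 0 < 1 + ν * p)
    (hc : ∀ ν ∈ Ioo (0:ℝ) 1, 2 * c ≤ p ^ 2 / (1 + ν * p) ^ 2) :
    ConcaveOn ℝ (Icc (0:ℝ) 1)
      (fun t => Real.log (1 + t * p) - t * L - c * (t * (1 - t))) := by
  apply concaveOn_of_hasDerivWithinAt2_nonpos (f' := fun t => p / (1 + t * p) - L - c * (1 - 2 * t))
    (f'' := fun t => -(p ^ 2 / (1 + t * p) ^ 2) + 2 * c) (convex_Icc 0 1)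
  · intro ν hν
    exact ((aux_d1 p L c ν (hpos ν hν)).continuousAt.continuousWithinAt)
  · intro ν hν
    rw [interior_Icc] at hν
    exact (aux_d1 p L c ν (hpos ν (Ioo_subset_Icc_self hν))).hasDerivWithinAt
  · intro ν hν
    rw [interior_Icc] at hν
    exact (aux_d2 p L c ν (hpos ν (Ioo_subset_Icc_self hν))).hasDerivWithinAt
  · intro ν hν
    rw [interior_Icc] at hν
    have := hc ν hν
    linarith

lemma aux_convex (p L c : ℝ) (hpos : ∀ ν ∈ Icc (0:ℝ) 1, 0 < 1 + ν * p)
    (hc : ∀ ν ∈ Ioo (0:ℝ) 1, p ^ 2 / (1 + ν * p) ^ 2 ≤ 2 * c) :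
    ConvexOn ℝ (Icc (0:ℝ) 1)
      (fun t => Real.log (1 + t * p) - t * L - c * (t * (1 - t))) := by
  apply convexOn_of_hasDerivWithinAt2_nonneg (f' := fun t => p / (1 + t * p) - L - c * (1 - 2 * t))
    (f'' := fun t => -(p ^ 2 / (1 + t * p) ^ 2) + 2 * c) (convex_Icc 0 1)
  · intro ν hν
    exact ((aux_d1 p L c ν (hpos ν hν)).continuousAt.continuousWithinAt)
  · intro ν hν
    rw [interior_Icc] at hν
    exact (aux_d1 p L c ν (hpos ν (Ioo_subset_Icc_self hν))).hasDerivWithinAt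
  · intro ν hν
    rw [interior_Icc] at hν
    exact (aux_d2 p L c ν (hpos ν (Ioo_subset_Icc_self hν))).hasDerivWithinAt
  · intro ν hν
    rw [interior_Icc] at hν
    have := hc ν hν
    linarith

theorem stmt_15 (γ Γ : ℝ) (hγ : 0 < γ) (hγ1 : γ ≤ 1) (h1Γ : 1 ≤ Γ)
    (x : ℝ) (hx : x ∈ Set.Icc γ Γ) (ν : ℝ) (hν : ν ∈ Set.Icc (0:ℝ) 1) :
    1/(2 * Γ^2) * ν * (1 - ν) * (x - 1)^2
      ≤ Real.log (1 - ν + ν * x) - ν * Real.log x ∧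
    Real.log (1 - ν + ν * x) - ν * Real.log x
      ≤ 1/(2 * γ^2) * ν * (1 - ν) * (x - 1)^2 := by
  obtain ⟨hγx, hxΓ⟩ := hx
  obtain ⟨hν0, hν1⟩ := hν
  set p := x - 1 with hp
  have hΓ0 : (0:ℝ) < Γ := lt_of_lt_of_le one_pos h1Γ
  have hpos : ∀ t ∈ Icc (0:ℝ) 1, 0 < 1 + t * p := by
    intro t ⟨ht0, ht1⟩
    have : γ ≤ 1 + t * p := by nlinarith
    linarith
  have hub : ∀ t ∈ Icc (0:ℝ) 1, 1 + t * p ≤ Γ := by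
    intro t ⟨ht0, ht1⟩
    nlinarith
  have hlb : ∀ t ∈ Icc (0:ℝ) 1, γ ≤ 1 + t * p := by
    intro t ⟨ht0, ht1⟩
    nlinarith
  have hlog : ∀ {c : ℝ}, Real.log (1 - ν + ν * x) - ν * Real.log x - c * (ν * (1 - ν))
      = (fun t => Real.log (1 + t * p) - t * Real.log x - c * (t * (1 - t))) ν := by
    intro c
    have : 1 - ν + ν * x = 1 + ν * p := by ring
    simp [this]
  have hxlog' : Real.log (1 + p) = Real.log x := by norm_num [hp]
  have hmem0 : (0:ℝ) ∈ Icc (0:ℝ) 1 := by norm_num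
  have hmem1 : (1:ℝ) ∈ Icc (0:ℝ) 1 := by norm_num
  have hcomb : (1 - ν) • (0:ℝ) + ν • (1:ℝ) = ν := by simp
  constructor
  · -- lower bound, c = p^2/(2Γ^2), concave
    set c := p ^ 2 / (2 * Γ ^ 2) with hcdef
    have hconc := aux_concave p (Real.log x) c hpos ?_
    · have h2 := hconc.2 hmem0 hmem1 (by linarith : (0:ℝ) ≤ 1 - ν) hν0 (by ring)
      simp only [smul_eq_mul] at h2
      norm_num [hxlog'] at h2
      have hceq : c * (ν * (1 - ν)) = 1/(2 * Γ^2) * ν * (1 - ν) * p^2 := by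
        rw [hcdef]; field_simp
      have hargeq : Real.log (1 - ν + ν * x) = Real.log (1 + ν * p) := by
        rw [show (1 - ν + ν * x) = 1 + ν * p by rw [hp]; ring]
      linarith [h2, hceq]
    · intro t ht
      have hm := hpos t (Ioo_subset_Icc_self ht)
      have hu := hub t (Ioo_subset_Icc_self ht)
      rw [hcdef]
      have h1 : p ^ 2 / Γ ^ 2 ≤ p ^ 2 / (1 + t * p) ^ 2 := by
        apply div_le_div_of_nonneg_left (by positivity) (by positivity)
        nlinarith
      calc 2 * (p ^ 2 / (2 * Γ ^ 2)) = p ^ 2 / Γ ^ 2 := by field_simp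
        _ ≤ _ := h1
  · -- upper bound, c = p^2/(2γ^2), convex
    set c := p ^ 2 / (2 * γ ^ 2) with hcdef
    have hconv := aux_convex p (Real.log x) c hpos ?_
    · have h2 := hconv.2 hmem0 hmem1 (by linarith : (0:ℝ) ≤ 1 - ν) hν0 (by ring)
      simp only [smul_eq_mul] at h2
      norm_num [hxlog'] at h2
      have hceq : c * (ν * (1 - ν)) = 1/(2 * γ^2) * ν * (1 - ν) * p^2 := by
        rw [hcdef]; field_simp
      have hargeq : Real.log (1 - ν + ν * x) = Real.log (1 + ν * p) := by
        rw [show (1 - ν + ν * x) = 1 + ν * p by rw [hp]; ring]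
      linarith [h2, hceq]
    · intro t ht
      have hm := hpos t (Ioo_subset_Icc_self ht)
      have hl := hlb t (Ioo_subset_Icc_self ht)
      rw [hcdef]
      have h1 : p ^ 2 / (1 + t * p) ^ 2 ≤ p ^ 2 / γ ^ 2 := by
        apply div_le_div_of_nonneg_left (by positivity) (by positivity)
        nlinarith
      calc p ^ 2 / (1 + t * p) ^ 2 ≤ p ^ 2 / γ ^ 2 := h1
        _ = 2 * (p ^ 2 / (2 * γ ^ 2)) := by field_simp
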